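/- Let σ₁₃, σ₂₃ > 0 with σ₁₃ ≠ σ₂₃. For ε > 0 define γ₂^ε : ℝ → ℝ by γ₂^ε(φ) = (3/(2√2))·[σ₁₃((1+φ)/2)²(2−φ) + σ₂₃((1−φ)/2)²(2+φ) + ((3+ε)/16)|σ₂₃−σ₁₃|(1−φ²)²]. Then there exist constants C > 0 and ε₀ > 0 such that for all 0 < ε < ε₀: | sup_{−1 ≤ φ ≤ 1} γ₂^ε(φ) − (3/(2√2))·max(σ₁₃, σ₂₃) − (3/(2√2))·(|σ₂₃−σ₁₃|/108)·ε³ | ≤ C ε⁴. -/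
import Mathlib

private lemma key_ineq (ε φ : ℝ) (he : 0 < ε) (h1 : -1 ≤ φ) (h2 : φ ≤ 1) :
    -(((1 + φ) / 2) ^ 2 * (2 - φ)) + (3 + ε) / 16 * (1 - φ ^ 2) ^ 2 ≤
      ε ^ 3 * (4 + ε) / (16 * (3 + ε) ^ 3) := by
  have hd : (0:ℝ) < 16 * (3 + ε) ^ 3 := by positivity
  rw [le_div_iff₀ hd]
  have h1' : (0:ℝ) ≤ 1 + φ := by linarith
  have h2' : (0:ℝ) ≤ 1 - φ := by linarith
  have hQ : 0 ≤ ε * (4 + ε) + 2 * (3 + ε) * (1 + φ) +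
      (3 + ε) ^ 2 * ((1 + φ) * (1 - φ)) := by
    have ha : (0:ℝ) ≤ (3 + ε) * (1 + φ) := by nlinarith
    have hb : (0:ℝ) ≤ (3 + ε) ^ 2 * ((1 + φ) * (1 - φ)) :=
      mul_nonneg (sq_nonneg _) (mul_nonneg h1' h2')
    nlinarith
  nlinarith [mul_nonneg (sq_nonneg ((3 + ε) * (1 + φ) - ε)) hQ]

private lemma err_bound (ε : ℝ) (he : 0 < ε) (he1 : ε < 1) :
    |ε ^ 3 * (4 + ε) / (16 * (3 + ε) ^ 3) - ε ^ 3 / 108| ≤ ε ^ 4 := by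
  have h3 : (0:ℝ) < 3 + ε := by linarith
  have hXeq : ε ^ 3 * (4 + ε) / (16 * (3 + ε) ^ 3) - ε ^ 3 / 108 =
      -(ε ^ 4 * (81 + 36 * ε + 4 * ε ^ 2) / (432 * (3 + ε) ^ 3)) := by
    field_simp
    ring
  rw [hXeq, abs_neg, abs_of_nonneg (by positivity), div_le_iff₀ (by positivity)]
  have h1 : (0:ℝ) ≤ 432 * (3 + ε) ^ 3 - (81 + 36 * ε + 4 * ε ^ 2) := by nlinarith
  nlinarith [mul_nonneg (pow_nonneg he.le 4) h1]

theorem gamma2_max_asymptotics (σ₁₃ σ₂₃ : ℝ) (h13 : 0 < σ₁₃) (h23 : 0 < σ₂₃)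
    (hne : σ₁₃ ≠ σ₂₃) :
    ∃ C > (0 : ℝ), ∃ ε₀ > (0 : ℝ), ∀ ε : ℝ, 0 < ε → ε < ε₀ →
      |sSup ((fun φ : ℝ =>
            3 / (2 * Real.sqrt 2) *
              (σ₁₃ * ((1 + φ) / 2) ^ 2 * (2 - φ) +
                σ₂₃ * ((1 - φ) / 2) ^ 2 * (2 + φ) +
                (3 + ε) / 16 * |σ₂₃ - σ₁₃| * (1 - φ ^ 2) ^ 2)) ''
          Set.Icc (-1 : ℝ) 1)
          - 3 / (2 * Real.sqrt 2) * max σ₁₃ σ₂₃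
          - 3 / (2 * Real.sqrt 2) * (|σ₂₃ - σ₁₃| / 108) * ε ^ 3| ≤ C * ε ^ 4 := by
  have hs2 : (0:ℝ) < Real.sqrt 2 := Real.sqrt_pos.mpr (by norm_num)
  set s : ℝ := 3 / (2 * Real.sqrt 2) with hs_def
  have hs : 0 < s := by positivity
  have hδ : 0 < |σ₂₃ - σ₁₃| := abs_pos.mpr (sub_ne_zero.mpr (Ne.symm hne))
  refine ⟨s * |σ₂₃ - σ₁₃|, mul_pos hs hδ, 1, one_pos, ?_⟩
  intro ε he he1
  have h3 : (0:ℝ) < 3 + ε := by linarith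
  have h3ne : (3:ℝ) + ε ≠ 0 := ne_of_gt h3
  rcases lt_or_gt_of_ne hne with hlt | hgt
  · -- σ₁₃ < σ₂₃
    have δabs : |σ₂₃ - σ₁₃| = σ₂₃ - σ₁₃ := abs_of_pos (by linarith)
    have hmax : max σ₁₃ σ₂₃ = σ₂₃ := max_eq_right hlt.le
    have hsup : sSup ((fun φ : ℝ =>
          s * (σ₁₃ * ((1 + φ) / 2) ^ 2 * (2 - φ) +
            σ₂₃ * ((1 - φ) / 2) ^ 2 * (2 + φ) +
            (3 + ε) / 16 * |σ₂₃ - σ₁₃| * (1 - φ ^ 2) ^ 2)) '' Set.Icc (-1 : ℝ) 1)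
        = s * (σ₂₃ + (σ₂₃ - σ₁₃) * (ε ^ 3 * (4 + ε) / (16 * (3 + ε) ^ 3))) := by
      apply IsGreatest.csSup_eq
      constructor
      · refine ⟨-3 / (3 + ε), ⟨?_, ?_⟩, ?_⟩
        · rw [neg_div]
          have : 3 / (3 + ε) ≤ 1 := (div_le_one h3).mpr (by linarith)
          linarith
        · rw [neg_div]
          have : 0 < 3 / (3 + ε) := by positivity
          linarith
        · simp only [δabs]
          congr 1
          field_simp
          ring
      · rintro y ⟨φ, ⟨hφ1, hφ2⟩, rfl⟩
        simp only [δabs]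
        apply mul_le_mul_of_nonneg_left _ hs.le
        have hk := key_ineq ε φ he hφ1 hφ2
        nlinarith [mul_le_mul_of_nonneg_left hk (sub_nonneg.mpr hlt.le)]
    rw [hsup, hmax, δabs]
    have hX : s * (σ₂₃ + (σ₂₃ - σ₁₃) * (ε ^ 3 * (4 + ε) / (16 * (3 + ε) ^ 3))) -
        s * σ₂₃ - s * ((σ₂₃ - σ₁₃) / 108) * ε ^ 3 =
        (s * (σ₂₃ - σ₁₃)) * (ε ^ 3 * (4 + ε) / (16 * (3 + ε) ^ 3) - ε ^ 3 / 108) := by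
      ring
    rw [hX, abs_mul, abs_of_pos (mul_pos hs (by linarith : (0:ℝ) < σ₂₃ - σ₁₃))]
    calc s * (σ₂₃ - σ₁₃) * |ε ^ 3 * (4 + ε) / (16 * (3 + ε) ^ 3) - ε ^ 3 / 108|
        ≤ s * (σ₂₃ - σ₁₃) * ε ^ 4 := by
          exact mul_le_mul_of_nonneg_left (err_bound ε he he1)
            (mul_nonneg hs.le (by linarith))
      _ = s * (σ₂₃ - σ₁₃) * ε ^ 4 := rfl
  · -- σ₂₃ < σ₁₃
    have δabs : |σ₂₃ - σ₁₃| = σ₁₃ - σ₂₃ := by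
      rw [abs_of_neg (by linarith : σ₂₃ - σ₁₃ < 0)]; ring
    have hmax : max σ₁₃ σ₂₃ = σ₁₃ := max_eq_left hgt.le
    have hsup : sSup ((fun φ : ℝ =>
          s * (σ₁₃ * ((1 + φ) / 2) ^ 2 * (2 - φ) +
            σ₂₃ * ((1 - φ) / 2) ^ 2 * (2 + φ) +
            (3 + ε) / 16 * |σ₂₃ - σ₁₃| * (1 - φ ^ 2) ^ 2)) '' Set.Icc (-1 : ℝ) 1)
        = s * (σ₁₃ + (σ₁₃ - σ₂₃) * (ε ^ 3 * (4 + ε) / (16 * (3 + ε) ^ 3))) := by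
      apply IsGreatest.csSup_eq
      constructor
      · refine ⟨3 / (3 + ε), ⟨?_, ?_⟩, ?_⟩
        · have : 0 < 3 / (3 + ε) := by positivity
          linarith
        · have : 3 / (3 + ε) ≤ 1 := (div_le_one h3).mpr (by linarith)
          linarith
        · simp only [δabs]
          congr 1
          field_simp
          ring
      · rintro y ⟨φ, ⟨hφ1, hφ2⟩, rfl⟩
        simp only [δabs]
        apply mul_le_mul_of_nonneg_left _ hs.le
        have hk := key_ineq ε (-φ) he (by linarith) (by linarith)
        nlinarith [mul_le_mul_of_nonneg_left hk (sub_nonneg.mpr hgt.le)]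
    rw [hsup, hmax, δabs]
    have hX : s * (σ₁₃ + (σ₁₃ - σ₂₃) * (ε ^ 3 * (4 + ε) / (16 * (3 + ε) ^ 3))) -
        s * σ₁₃ - s * ((σ₁₃ - σ₂₃) / 108) * ε ^ 3 =
        (s * (σ₁₃ - σ₂₃)) * (ε ^ 3 * (4 + ε) / (16 * (3 + ε) ^ 3) - ε ^ 3 / 108) := by
      ring
    rw [hX, abs_mul, abs_of_pos (mul_pos hs (by linarith : (0:ℝ) < σ₁₃ - σ₂₃))]
    exact mul_le_mul_of_nonneg_left (err_bound ε he he1)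
      (mul_nonneg hs.le (by linarith))
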